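/- Let Γ_𝒯 be the A₂-tilde group of a finite projective plane (P, L) with bijection σ : P ≃ L and compatible triella 𝒯, and let δ : Γ_𝒯 → ℕ × ℕ be the shape function. If w₀, w₁, w₂ ∈ Γ_𝒯 satisfy δ(w₀·w₁) = δ(w₀) + δ(w₁), δ(w₁·w₂) = δ(w₁) + δ(w₂), and (1,1) ≤ δ(w₁) componentwise, then δ(w₀·w₁·w₂) = δ(w₀) + δ(w₁) + δ(w₂). -/

import Mathlib

/-- The relations of the A₂-tilde group: `a_x a_y a_z = 1` for `(x, y, z) ∈ T`. -/
def A2Rels {P : Type} (T : Set (P × P × P)) : Set (FreeGroup P) :=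
  (fun t : P × P × P => FreeGroup.of t.1 * FreeGroup.of t.2.1 * FreeGroup.of t.2.2) '' T

/-- The A₂-tilde group associated to a triella `T`. -/
abbrev A2TildeGroup {P : Type} (T : Set (P × P × P)) : Type := PresentedGroup (A2Rels T)

/-- The generator `a_x` of the A₂-tilde group. -/
def a {P : Type} (T : Set (P × P × P)) (x : P) : A2TildeGroup T := PresentedGroup.of x

/-- `(xs, ys)` is a right normal form of `w`:
`w = a_{x₁} ⋯ a_{x_m} · a_{y₁}⁻¹ ⋯ a_{y_n}⁻¹` with `x_{i+1} ∉ σ x_i`, `y_j ∉ σ y_{j+1}`,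
and `x_m ≠ y₁` when both lists are nonempty. -/
def IsRNF {P L : Type} [Membership P L] (σ : P ≃ L) (T : Set (P × P × P))
    (w : A2TildeGroup T) (xs ys : List P) : Prop :=
  w = (xs.map fun x => a T x).prod * (ys.map fun y => (a T y)⁻¹).prod ∧
  List.Chain' (fun p q => q ∉ σ p) xs ∧
  List.Chain' (fun p q => p ∉ σ q) ys ∧
  (∀ x ∈ xs.getLast?, ∀ y ∈ ys.head?, x ≠ y)

/-- `(ts, ss)` is a left normal form of `w`:
`w = a_{t₁}⁻¹ ⋯ a_{t_n}⁻¹ · a_{s₁} ⋯ a_{s_m}` with `s_{i+1} ∉ σ s_i`, `t_j ∉ σ t_{j+1}`,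
and the last entry of `ts` distinct from the first entry of `ss` when both are
nonempty. -/
def IsLNF {P L : Type} [Membership P L] (σ : P ≃ L) (T : Set (P × P × P))
    (w : A2TildeGroup T) (ts ss : List P) : Prop :=
  w = (ts.map fun t => (a T t)⁻¹).prod * (ss.map fun s => a T s).prod ∧
  List.Chain' (fun p q => q ∉ σ p) ss ∧
  List.Chain' (fun p q => p ∉ σ q) ts ∧
  (∀ t ∈ ts.getLast?, ∀ s ∈ ss.head?, t ≠ s)

/-- The evaluation of a letter: `(x, true)` is the generator `a_x` and `(x, false)` its
inverse. -/
def letterEval {P : Type} (T : Set (P × P × P)) (pb : P × Bool) : A2TildeGroup T :=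
  if pb.2 then a T pb.1 else (a T pb.1)⁻¹

namespace A2

variable {P L : Type} [Membership P L]

/-- positive word -/
def pw (T : Set (P × P × P)) (xs : List P) : A2TildeGroup T := (xs.map fun x => a T x).prod
/-- negative word -/
def nw (T : Set (P × P × P)) (ys : List P) : A2TildeGroup T := (ys.map fun y => (a T y)⁻¹).prod

variable {T : Set (P × P × P)}

@[simp] lemma pw_nil : pw T [] = 1 := rfl
@[simp] lemma nw_nil : nw T [] = 1 := rfl

lemma pw_append (xs ys : List P) : pw T (xs ++ ys) = pw T xs * pw T ys := by
  simp [pw, List.map_append, List.prod_append]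

lemma nw_append (xs ys : List P) : nw T (xs ++ ys) = nw T xs * nw T ys := by
  simp [nw, List.map_append, List.prod_append]

@[simp] lemma pw_singleton (x : P) : pw T [x] = a T x := by simp [pw]
@[simp] lemma nw_singleton (x : P) : nw T [x] = (a T x)⁻¹ := by simp [nw]

lemma pw_cons (x : P) (xs : List P) : pw T (x :: xs) = a T x * pw T xs := by
  simp [pw]

lemma nw_cons (x : P) (xs : List P) : nw T (x :: xs) = (a T x)⁻¹ * nw T xs := by
  simp [nw]

lemma rel_one {x y z : P} (h : (x, y, z) ∈ T) : a T x * a T y * a T z = 1 := by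
  have hmem : (FreeGroup.of x * FreeGroup.of y * FreeGroup.of z) ∈ A2Rels T :=
    ⟨(x, y, z), h, rfl⟩
  have : (PresentedGroup.mk (A2Rels T)) (FreeGroup.of x * FreeGroup.of y * FreeGroup.of z) = 1 := by
    exact (QuotientGroup.eq_one_iff _).mpr (Subgroup.subset_normalClosure hmem)
  simpa [a, PresentedGroup.of, map_mul] using this

lemma pair_eq {x y z : P} (h : (x, y, z) ∈ T) : a T x * a T y = (a T z)⁻¹ :=
  eq_inv_of_mul_eq_one_left (rel_one h)

/-- contraction of two inverse letters into a positive letter: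
`a_y⁻¹ a_x⁻¹ = a_z` when `(x,y,z) ∈ T`. -/
lemma neg_contract {x y z : P} (h : (x, y, z) ∈ T) : (a T y)⁻¹ * (a T x)⁻¹ = a T z := by
  have := pair_eq h
  rw [← mul_inv_rev, this, inv_inv]

/-- the interchange relation: `a_b⁻¹ a_c = a_{c'} a_{b'}⁻¹`
when `(z,b,c') ∈ T` and `(z,c,b') ∈ T`. -/
lemma interchange_eq {z b c c' b' : P} (h1 : (z, b, c') ∈ T) (h2 : (z, c, b') ∈ T) :
    (a T b)⁻¹ * a T c = a T c' * (a T b')⁻¹ := by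
  have e1 : a T z * a T b = (a T c')⁻¹ := eq_inv_of_mul_eq_one_left (rel_one h1)
  have e2 : a T z * a T c = (a T b')⁻¹ := eq_inv_of_mul_eq_one_left (rel_one h2)
  have hb : (a T b)⁻¹ = a T c' * a T z := by
    have : a T b = (a T z)⁻¹ * (a T c')⁻¹ := by
      rw [← e1]; group
    rw [this]; group
  rw [hb, mul_assoc, e2]


structure TriHyp {P L : Type} [Membership P L] (σ : P ≃ L) (T : Set (P × P × P)) : Prop where
  t1 : ∀ x y : P, (∃ z, (x, y, z) ∈ T) ↔ y ∈ σ x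
  t2 : ∀ x y z : P, (x, y, z) ∈ T → (y, z, x) ∈ T
  t3 : ∀ x y z z' : P, (x, y, z) ∈ T → (x, y, z') ∈ T → z = z'

variable {P L : Type} [Membership P L] {σ : P ≃ L} {T : Set (P × P × P)}

namespace TriHyp

lemma mem12 (hT : TriHyp σ T) {x y z : P} (h : (x, y, z) ∈ T) : y ∈ σ x := (hT.t1 x y).mp ⟨z, h⟩
lemma mem23 (hT : TriHyp σ T) {x y z : P} (h : (x, y, z) ∈ T) : z ∈ σ y :=
  hT.mem12 (hT.t2 _ _ _ h)
lemma mem31 (hT : TriHyp σ T) {x y z : P} (h : (x, y, z) ∈ T) : x ∈ σ z :=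
  hT.mem12 (hT.t2 _ _ _ (hT.t2 _ _ _ h))

lemma third (hT : TriHyp σ T) (x : P) {y : P} (h : y ∈ σ x) : ∃ z, (x, y, z) ∈ T :=
  (hT.t1 x y).mpr h

/-- uniqueness in the second coordinate -/
lemma uniq2 (hT : TriHyp σ T) {z y y' d : P} (h1 : (z, y, d) ∈ T) (h2 : (z, y', d) ∈ T) :
    y = y' :=
  hT.t3 d z y y' (hT.t2 _ _ _ (hT.t2 _ _ _ h1)) (hT.t2 _ _ _ (hT.t2 _ _ _ h2))

/-- uniqueness in the first coordinate -/
lemma uniq1 (hT : TriHyp σ T) {x x' y z : P} (h1 : (x, y, z) ∈ T) (h2 : (x', y, z) ∈ T) :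
    x = x' :=
  hT.t3 y z x x' (hT.t2 _ _ _ h1) (hT.t2 _ _ _ h2)

lemma thirds_ne (hT : TriHyp σ T) {z b c c' b' : P} (h1 : (z, b, c') ∈ T) (h2 : (z, c, b') ∈ T)
    (hbc : b ≠ c) : c' ≠ b' := fun h => hbc (hT.uniq2 h1 (h ▸ h2))

end TriHyp

section Geometry

variable [Fintype P] [Fintype L] [Configuration.ProjectivePlane P L]

/-- two distinct points lie on at most one "σ-line" -/
lemma sigma_line_unique {p q u v : P} (hpq : p ≠ q) (h1 : p ∈ σ u) (h2 : q ∈ σ u)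
    (h3 : p ∈ σ v) (h4 : q ∈ σ v) : u = v := by
  have := Configuration.Nondegenerate.eq_or_eq (P := P) (L := L) h1 h2 h3 h4
  rcases this with h | h
  · exact absurd h hpq
  · exact σ.injective h

/-- through two distinct points there is a "σ-line" -/
lemma sigma_line_exists {b c : P} (hbc : b ≠ c) : ∃ z, b ∈ σ z ∧ c ∈ σ z := by
  refine ⟨σ.symm (Configuration.HasLines.mkLine (P := P) (L := L) hbc), ?_⟩
  have := Configuration.HasLines.mkLine_ax (P := P) (L := L) hbc
  simpa using this

/-- the interchange configuration: for `b ≠ c` there are `z, c', b'` with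
`(z,b,c') ∈ T` and `(z,c,b') ∈ T`. -/
lemma interchange (hT : TriHyp σ T) {b c : P} (hbc : b ≠ c) :
    ∃ z c' b', (z, b, c') ∈ T ∧ (z, c, b') ∈ T := by
  obtain ⟨z, hbz, hcz⟩ := sigma_line_exists (σ := σ) hbc
  obtain ⟨c', hc'⟩ := hT.third z hbz
  obtain ⟨b', hb'⟩ := hT.third z hcz
  exact ⟨z, c', b', hc', hb'⟩

/-- crux chain lemma C1. -/
lemma chainC1 (hT : TriHyp σ T) {y y' d d' z z' B B' : P}
    (hyy' : y ∉ σ y') (hy'd' : y' ≠ d')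
    (hz'1 : (z', y', d) ∈ T) (hz'2 : (z', d', B') ∈ T)
    (hzy : y ∈ σ z) (hz2 : (z, d, B) ∈ T) : B ∉ σ B' := by
  intro hBB'
  have hz'd : z' ∈ σ d := hT.mem23 (hT.t2 _ _ _ hz'1)
  have hBd : B ∈ σ d := hT.mem23 hz2
  have hz'B' : z' ∈ σ B' := hT.mem23 (hT.t2 _ _ _ hz'2)
  by_cases hzB : z' = B
  · have h1 : (z, d, z') ∈ T := by rw [hzB]; exact hz2
    have h2 : (y', d, z') ∈ T := hT.t2 _ _ _ hz'1
    have : z = y' := hT.uniq1 h1 h2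
    exact hyy' (this ▸ hzy)
  · have heq : d = B' := sigma_line_unique (σ := σ) hzB hz'd hBd hz'B' hBB'
    rw [← heq] at hz'2
    exact hy'd' (hT.uniq2 hz'1 hz'2)

/-- crux chain lemma C3 (boundary contraction). -/
lemma chainC3 (hT : TriHyp σ T) {x y d d₀ z₁ B₁ z' : P}
    (hxy : x ≠ y) (hyd : y ≠ d)
    (h1 : (z₁, y, d₀) ∈ T) (h2 : (z₁, d, B₁) ∈ T) (h3 : (x, d₀, z') ∈ T) : z' ∉ σ B₁ := by
  intro hz'B
  have hz₁B : z₁ ∈ σ B₁ := hT.mem23 (hT.t2 _ _ _ h2)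
  have hz₁d₀ : z₁ ∈ σ d₀ := hT.mem23 (hT.t2 _ _ _ h1)
  have hz'd₀ : z' ∈ σ d₀ := hT.mem23 h3
  by_cases hzz : z' = z₁
  · have hA : (x, d₀, z₁) ∈ T := by rw [← hzz]; exact h3
    have hB : (y, d₀, z₁) ∈ T := hT.t2 _ _ _ h1
    exact hxy (hT.uniq1 hA hB)
  · have heq : B₁ = d₀ := sigma_line_unique (σ := σ) hzz hz'B hz₁B hz'd₀ hz₁d₀
    rw [heq] at h2
    exact hyd (hT.uniq2 h1 h2)

/-- crux lemma for the double push invariant. -/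
lemma invStep (hT : TriHyp σ T) {y dk Bk z zh d' dh' dhk : P}
    (hne : y ≠ dk) (hInv : dhk ∉ σ dk)
    (h1 : (z, y, d') ∈ T) (h2 : (z, dk, Bk) ∈ T)
    (h3 : (zh, Bk, dh') ∈ T) (h4 : dhk ∈ σ zh) : dh' ∉ σ d' := by
  intro hdd
  have hzd' : z ∈ σ d' := hT.mem23 (hT.t2 _ _ _ h1)
  have hzBk : z ∈ σ Bk := hT.mem23 (hT.t2 _ _ _ h2)
  have hdh'Bk : dh' ∈ σ Bk := hT.mem23 h3
  by_cases hzz : z = dh'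
  · have hA : (zh, Bk, z) ∈ T := by rw [hzz]; exact h3
    have hB : (dk, Bk, z) ∈ T := hT.t2 _ _ _ h2
    have : zh = dk := hT.uniq1 hA hB
    exact hInv (this ▸ h4)
  · have : d' = Bk := sigma_line_unique (σ := σ) hzz hzd' hdd hzBk hdh'Bk
    exact hne (hT.uniq2 h1 (by rw [this]; exact h2))

end Geometry



section Push

variable {P L : Type} [Membership P L] [Fintype P] [Fintype L]
  [Configuration.ProjectivePlane P L] {σ : P ≃ L} {T : Set (P × P × P)}

set_option maxHeartbeats 1000000 in
/-- The fundamental "push" lemma: pushing a positive letter `a_e` leftwards through a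
negative chain `Y⁻¹` by repeated interchanges. -/
lemma push (hT : TriHyp σ T) :
    ∀ (Y : List P) (e : P), List.Chain' (fun p q => p ∉ σ q) Y →
    (∀ yl ∈ Y.getLast?, yl ≠ e) →
    ∃ (d₀ : P) (B : List P),
      nw T Y * a T e = a T d₀ * nw T B ∧
      B.length = Y.length ∧
      List.Chain' (fun p q => p ∉ σ q) B ∧
      (∀ y₁ ∈ Y.head?, ∀ b₁ ∈ B.head?, ∃ z₁ d₁,
        (z₁, y₁, d₀) ∈ T ∧ (z₁, d₁, b₁) ∈ T ∧ y₁ ≠ d₁) ∧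
      (∀ yl ∈ Y.getLast?, ∀ bl ∈ B.getLast?, ∃ zl, yl ∈ σ zl ∧ (zl, e, bl) ∈ T) ∧
      (Y = [] → d₀ = e ∧ B = []) := by
  intro Y
  induction Y using List.reverseRecOn with
  | nil =>
      intro e _ _
      exact ⟨e, [], by simp, rfl, List.isChain_nil, by simp, by simp, fun _ => ⟨rfl, rfl⟩⟩
  | append_singleton Y₀ y IH =>
      intro e hchain hlast
      have hye : y ≠ e := hlast y (by simp [List.getLast?_concat])
      obtain ⟨z, c₁, b₁, hz1, hz2⟩ := interchange hT hye
      have hc₁y : c₁ ∈ σ y := hT.mem23 hz1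
      obtain ⟨hch₀, -, hlink⟩ := List.isChain_append.mp hchain
      have hlinky : ∀ yl ∈ Y₀.getLast?, yl ∉ σ y := by
        intro yl hyl
        exact hlink yl hyl y (by simp)
      have hlast₀ : ∀ yl ∈ Y₀.getLast?, yl ≠ c₁ := by
        intro yl hyl heq
        exact (hlinky yl hyl) (heq ▸ hc₁y)
      obtain ⟨d₀, B₀, heq₀, hlen₀, hchB₀, hhead₀, hlastsp₀, hnil₀⟩ := IH c₁ hch₀ hlast₀
      refine ⟨d₀, B₀ ++ [b₁], ?_, ?_, ?_, ?_, ?_, ?_⟩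
      · -- the group equation
        rw [nw_append, nw_append, nw_singleton, nw_singleton]
        calc nw T Y₀ * (a T y)⁻¹ * a T e
            = nw T Y₀ * ((a T y)⁻¹ * a T e) := by rw [mul_assoc]
          _ = nw T Y₀ * (a T c₁ * (a T b₁)⁻¹) := by rw [interchange_eq hz1 hz2]
          _ = (nw T Y₀ * a T c₁) * (a T b₁)⁻¹ := by rw [mul_assoc]
          _ = (a T d₀ * nw T B₀) * (a T b₁)⁻¹ := by rw [heq₀]
          _ = a T d₀ * (nw T B₀ * (a T b₁)⁻¹) := by rw [mul_assoc]
      · simp [hlen₀]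
      · refine List.isChain_append.mpr ⟨hchB₀, List.isChain_singleton _, ?_⟩
        intro bl hbl b hb
        simp only [List.head?_cons, Option.mem_some_iff] at hb
        subst hb
        have hB₀ne : B₀ ≠ [] := by
          intro h; rw [h] at hbl; simp at hbl
        have hY₀ne : Y₀ ≠ [] := by
          intro h; apply hB₀ne; rw [h] at hlen₀; exact List.length_eq_zero_iff.mp hlen₀
        obtain ⟨yl, hyl⟩ := List.getLast?_isSome.mpr hY₀ne |> Option.isSome_iff_exists.mp
        obtain ⟨zl, hylzl, hzl2⟩ := hlastsp₀ yl hyl bl hbl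
        exact chainC1 hT (hlinky yl hyl) hye hz1 hz2 hylzl hzl2
      · -- head spec
        intro y₁ hy₁ b hb
        rcases eq_or_ne Y₀ [] with h0 | h0
        · obtain ⟨hd₀, hB₀⟩ := hnil₀ h0
          subst h0 hd₀ hB₀
          simp only [List.nil_append, List.head?_cons, Option.mem_some_iff] at hy₁ hb
          subst hy₁; subst hb
          exact ⟨z, e, hz1, hz2, hye⟩
        · have hB₀ne : B₀ ≠ [] := by
            intro h; apply h0; rw [h] at hlen₀
            exact (List.length_eq_zero_iff.mp hlen₀.symm)
          rw [List.head?_append_of_ne_nil _ h0] at hy₁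
          rw [List.head?_append_of_ne_nil _ hB₀ne] at hb
          exact hhead₀ y₁ hy₁ b hb
      · -- last spec
        intro yl hyl bl hbl
        simp only [List.getLast?_concat, Option.mem_some_iff] at hyl hbl
        subst hyl; subst hbl
        exact ⟨z, hT.mem12 hz1, hz2⟩
      · intro h; simp at h

end Push


lemma eq_nil_or_append_last {α : Type*} (l : List α) : l = [] ∨ ∃ l₀ x, l = l₀ ++ [x] := by
  rcases l.eq_nil_or_concat with h | ⟨l₀, x, h⟩
  · exact Or.inl h
  · exact Or.inr ⟨l₀, x, by simpa using h⟩
section Delta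

variable {P L : Type} [Membership P L] [Fintype P] [Fintype L]
  [Configuration.ProjectivePlane P L] {σ : P ≃ L} {T : Set (P × P × P)}

lemma isRNF_def {w : A2TildeGroup T} {xs ys : List P} :
    IsRNF σ T w xs ys ↔
      (w = pw T xs * nw T ys ∧
       List.Chain' (fun p q => q ∉ σ p) xs ∧
       List.Chain' (fun p q => p ∉ σ q) ys ∧
       (∀ x ∈ xs.getLast?, ∀ y ∈ ys.head?, x ≠ y)) := Iff.rfl

/-- The shape-function hypothesis. -/
structure DeltaHyp (σ : P ≃ L) (T : Set (P × P × P)) (δ : A2TildeGroup T → ℕ × ℕ) : Prop where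
  spec : ∀ (w : A2TildeGroup T) (m n : ℕ),
    δ w = (m, n) ↔ ∃ xs ys : List P, IsRNF σ T w xs ys ∧ xs.length = m ∧ ys.length = n

namespace DeltaHyp

variable {δ : A2TildeGroup T → ℕ × ℕ}

lemma delta_of_rnf (hδ : DeltaHyp σ T δ) {w : A2TildeGroup T} {xs ys : List P}
    (h : IsRNF σ T w xs ys) : δ w = (xs.length, ys.length) :=
  (hδ.spec w _ _).mpr ⟨xs, ys, h, rfl, rfl⟩

lemma exists_rnf (hδ : DeltaHyp σ T δ) (w : A2TildeGroup T) :
    ∃ xs ys : List P, IsRNF σ T w xs ys ∧ xs.length = (δ w).1 ∧ ys.length = (δ w).2 :=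
  (hδ.spec w (δ w).1 (δ w).2).mp rfl

lemma delta_one (hδ : DeltaHyp σ T δ) : δ 1 = (0, 0) := by
  have h : IsRNF σ T (1 : A2TildeGroup T) [] [] :=
    isRNF_def.mpr ⟨by simp, List.isChain_nil, List.isChain_nil, by simp⟩
  simpa using hδ.delta_of_rnf h

end DeltaHyp

/-- dropping the final negative letter of a right normal form. -/
lemma rnf_drop_last_neg {w : A2TildeGroup T} {xs ys : List P} {d : P}
    (h : IsRNF σ T w xs (ys ++ [d])) : IsRNF σ T (w * a T d) xs ys := by
  obtain ⟨hw, hx, hy, hxy⟩ := isRNF_def.mp h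
  refine isRNF_def.mpr ⟨?_, hx, (List.isChain_append.mp hy).1, ?_⟩
  · rw [hw, nw_append, nw_singleton]
    group
  · intro x hx' y hy'
    refine hxy x hx' y ?_
    have hne : ys ≠ [] := by rintro rfl; simp at hy'
    rwa [List.head?_append_of_ne_nil _ hne]

/-- dropping the final positive letter of a purely positive right normal form. -/
lemma rnf_drop_last_pos {w : A2TildeGroup T} {xs : List P} {c : P}
    (h : IsRNF σ T w (xs ++ [c]) []) : IsRNF σ T (w * (a T c)⁻¹) xs [] := by
  obtain ⟨hw, hx, hy, hxy⟩ := isRNF_def.mp h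
  refine isRNF_def.mpr ⟨?_, (List.isChain_append.mp hx).1, List.isChain_nil, by simp⟩
  rw [hw]
  simp [pw_append, nw_nil]

/-- appending a negative letter to a right normal form, given the side conditions. -/
lemma rnf_append_neg {w : A2TildeGroup T} {xs ys : List P} {f : P}
    (h : IsRNF σ T w xs ys)
    (h1 : ∀ yl ∈ ys.getLast?, yl ∉ σ f)
    (h2 : ys = [] → ∀ x ∈ xs.getLast?, x ≠ f) :
    IsRNF σ T (w * (a T f)⁻¹) xs (ys ++ [f]) := by
  obtain ⟨hw, hx, hy, hxy⟩ := isRNF_def.mp h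
  refine isRNF_def.mpr ⟨?_, hx, ?_, ?_⟩
  · rw [hw, nw_append, nw_singleton, mul_assoc]
  · exact List.isChain_append.mpr ⟨hy, List.isChain_singleton _, by simpa using h1⟩
  · intro x hx' y hy'
    rcases eq_or_ne ys [] with rfl | hne
    · simp only [List.nil_append, List.head?_cons, Option.mem_some_iff] at hy'
      subst hy'
      exact h2 rfl x hx'
    · rw [List.head?_append_of_ne_nil _ hne] at hy'
      exact hxy x hx' y hy'

/-- appending a positive letter to a purely positive right normal form. -/
lemma rnf_append_pos {w : A2TildeGroup T} {xs : List P} {f : P}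
    (h : IsRNF σ T w xs [])
    (h1 : ∀ xl ∈ xs.getLast?, f ∉ σ xl) :
    IsRNF σ T (w * a T f) (xs ++ [f]) [] := by
  obtain ⟨hw, hx, _, _⟩ := isRNF_def.mp h
  refine isRNF_def.mpr ⟨?_, ?_, List.isChain_nil, by simp⟩
  · rw [hw]
    simp [pw_append, nw_nil]
  · exact List.isChain_append.mpr ⟨hx, List.isChain_singleton _, by simpa using h1⟩

/-- Boundary assembly, non-contracting case. -/
lemma boundary_pos (hT : TriHyp σ T) {w : A2TildeGroup T} {X B : List P} {d₀ : P}
    (heq : w = pw T X * (a T d₀ * nw T B))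
    (hchX : List.Chain' (fun p q => q ∉ σ p) X)
    (hchB : List.Chain' (fun p q => p ∉ σ q) B)
    (hsep : ∀ b ∈ B.head?, ∃ z₁ d₁ y₁,
      (z₁, y₁, d₀) ∈ T ∧ (z₁, d₁, b) ∈ T ∧ y₁ ≠ d₁ ∧ (∀ xl ∈ X.getLast?, xl ≠ y₁))
    (hnc : ∀ xl ∈ X.getLast?, d₀ ∉ σ xl) :
    IsRNF σ T w (X ++ [d₀]) B := by
  refine isRNF_def.mpr ⟨?_, ?_, hchB, ?_⟩
  · rw [heq, pw_append, pw_singleton, mul_assoc]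
  · exact List.isChain_append.mpr ⟨hchX, List.isChain_singleton _, by simpa using hnc⟩
  · intro x hx' b hb'
    simp only [List.getLast?_concat, Option.mem_some_iff] at hx'
    subst hx'
    obtain ⟨z₁, d₁, y₁, hA, hB, hne, -⟩ := hsep b hb'
    intro hdb
    subst hdb
    exact hne (hT.uniq2 hA hB)

/-- Boundary assembly, contracting case. -/
lemma boundary_contract (hT : TriHyp σ T) {w : A2TildeGroup T} {X₀ B : List P} {d₀ x : P}
    (heq : w = pw T (X₀ ++ [x]) * (a T d₀ * nw T B))
    (hchX : List.Chain' (fun p q => q ∉ σ p) (X₀ ++ [x]))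
    (hchB : List.Chain' (fun p q => p ∉ σ q) B)
    (hsep : ∀ b ∈ B.head?, ∃ z₁ d₁ y₁,
      (z₁, y₁, d₀) ∈ T ∧ (z₁, d₁, b) ∈ T ∧ y₁ ≠ d₁ ∧ (∀ xl ∈ (X₀ ++ [x]).getLast?, xl ≠ y₁))
    (hc : d₀ ∈ σ x) :
    ∃ z', (x, d₀, z') ∈ T ∧ IsRNF σ T w X₀ (z' :: B) := by
  obtain ⟨z', hz'⟩ := hT.third x hc
  refine ⟨z', hz', isRNF_def.mpr ⟨?_, ?_, ?_, ?_⟩⟩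
  · rw [heq, pw_append, pw_singleton, nw_cons]
    have : a T x * a T d₀ = (a T z')⁻¹ := pair_eq hz'
    calc pw T X₀ * a T x * (a T d₀ * nw T B)
        = pw T X₀ * ((a T x * a T d₀) * nw T B) := by group
      _ = pw T X₀ * ((a T z')⁻¹ * nw T B) := by rw [this]
  · exact (List.isChain_append.mp hchX).1
  · refine List.isChain_cons.mpr ⟨?_, hchB⟩
    intro b hb
    obtain ⟨z₁, d₁, y₁, hA, hB, hne, hxl⟩ := hsep b hb
    have hxy₁ : x ≠ y₁ := hxl x (by simp [List.getLast?_concat])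
    exact chainC3 hT hxy₁ hne hA hB hz'
  · intro x₀ hx₀ y hy
    simp only [List.head?_cons, Option.mem_some_iff] at hy
    subst hy
    intro hctr
    subst hctr
    have hxz : x ∈ σ x₀ := hT.mem31 hz'
    have := (List.isChain_append.mp hchX).2.2 x₀ hx₀ x (by simp)
    exact this hxz

end Delta

section LMR

variable {P L : Type} [Membership P L] [Fintype P] [Fintype L]
  [Configuration.ProjectivePlane P L] {σ : P ≃ L} {T : Set (P × P × P)}
  {δ : A2TildeGroup T → ℕ × ℕ}

/-- Local move rule for right multiplication by a positive generator. -/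
lemma mul_pos_cases (hT : TriHyp σ T) (hδ : DeltaHyp σ T δ) (w : A2TildeGroup T) (e : P) :
    δ (w * a T e) = δ w + (1, 0) ∨
    δ (w * a T e) + (1, 0) = δ w + (0, 1) ∨
    δ (w * a T e) + (0, 1) = δ w := by
  obtain ⟨X, Y, hR, hlx, hly⟩ := hδ.exists_rnf w
  have hδw : δ w = (X.length, Y.length) := hδ.delta_of_rnf hR
  obtain ⟨hw, hchX, hchY, hlh⟩ := isRNF_def.mp hR
  rcases eq_nil_or_append_last Y with rfl | ⟨Y₀, y, rfl⟩
  · -- no negative part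
    rcases eq_nil_or_append_last X with rfl | ⟨X₀, x, rfl⟩
    · left
      have : IsRNF σ T (w * a T e) [e] [] :=
        isRNF_def.mpr ⟨by rw [hw]; simp, List.isChain_singleton _, List.isChain_nil, by simp⟩
      rw [hδ.delta_of_rnf this, hδw]
      rfl
    · by_cases hc : e ∈ σ x
      · obtain ⟨z', hz'⟩ := hT.third x hc
        right; left
        have : IsRNF σ T (w * a T e) X₀ [z'] := by
          refine isRNF_def.mpr ⟨?_, (List.isChain_append.mp hchX).1, List.isChain_singleton _, ?_⟩
          · rw [hw]
            have : a T x * a T e = (a T z')⁻¹ := pair_eq hz'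
            calc pw T (X₀ ++ [x]) * nw T [] * a T e
                = pw T X₀ * (a T x * a T e) := by
                  rw [pw_append, pw_singleton, nw_nil, mul_one, mul_assoc]
              _ = pw T X₀ * (a T z')⁻¹ := by rw [this]
              _ = pw T X₀ * nw T [z'] := by simp
          · intro x₀ hx₀ yy hyy
            simp only [List.head?_cons, Option.mem_some_iff] at hyy
            subst hyy
            intro hctr
            subst hctr
            exact (List.isChain_append.mp hchX).2.2 x₀ hx₀ x (by simp) (hT.mem31 hz')
        rw [hδ.delta_of_rnf this, hδw]
        simp [Prod.ext_iff]
        try omega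
      · left
        have : IsRNF σ T (w * a T e) (X₀ ++ [x] ++ [e]) [] := by
          refine rnf_append_pos ?_ ?_
          · exact isRNF_def.mpr ⟨hw, hchX, List.isChain_nil, by simp⟩
          · intro xl hxl
            simp only [List.getLast?_concat, Option.mem_some_iff] at hxl
            subst hxl; exact hc
        rw [hδ.delta_of_rnf this, hδw]
        simp [Prod.ext_iff]
  · -- negative part ends with y
    by_cases hye : y = e
    · right; right
      subst hye
      have : IsRNF σ T (w * a T y) X Y₀ :=
        rnf_drop_last_neg (isRNF_def.mpr ⟨hw, hchX, hchY, hlh⟩)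
      rw [hδ.delta_of_rnf this, hδw]
      simp [Prod.ext_iff]
    · -- push
      have hlaste : ∀ yl ∈ (Y₀ ++ [y]).getLast?, yl ≠ e := by
        intro yl hyl
        simp only [List.getLast?_concat, Option.mem_some_iff] at hyl
        subst hyl; exact hye
      obtain ⟨d₀, B, heqp, hlen, hchB, hhead, hlastsp, -⟩ :=
        push hT (Y₀ ++ [y]) e hchY hlaste
      have heqw : w * a T e = pw T X * (a T d₀ * nw T B) := by
        rw [hw, mul_assoc, heqp]
      have hsep : ∀ b ∈ B.head?, ∃ z₁ d₁ y₁,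
          (z₁, y₁, d₀) ∈ T ∧ (z₁, d₁, b) ∈ T ∧ y₁ ≠ d₁ ∧
          (∀ xl ∈ X.getLast?, xl ≠ y₁) := by
        intro b hb
        have hY₁ : ∃ y₁, (Y₀ ++ [y]).head? = some y₁ := by
          rcases Y₀ with _ | ⟨y₀, Y₀'⟩ <;> exact ⟨_, rfl⟩
        obtain ⟨y₁, hy₁⟩ := hY₁
        obtain ⟨z₁, d₁, hA, hB2, hne⟩ := hhead y₁ hy₁ b hb
        exact ⟨z₁, d₁, y₁, hA, hB2, hne, fun xl hxl => hlh xl hxl y₁ hy₁⟩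
      rcases eq_nil_or_append_last X with rfl | ⟨X₀, x, rfl⟩
      · left
        have : IsRNF σ T (w * a T e) ([] ++ [d₀]) B :=
          boundary_pos hT heqw hchX hchB hsep (by simp)
        rw [hδ.delta_of_rnf this, hδw]
        simp [Prod.ext_iff, hlen]
      · by_cases hc : d₀ ∈ σ x
        · right; left
          obtain ⟨z', -, hrnf⟩ := boundary_contract hT heqw hchX hchB hsep hc
          rw [hδ.delta_of_rnf hrnf, hδw]
          simp [Prod.ext_iff, hlen]
          try omega
        · left
          have hnc : ∀ xl ∈ (X₀ ++ [x]).getLast?, d₀ ∉ σ xl := by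
            intro xl hxl
            simp only [List.getLast?_concat, Option.mem_some_iff] at hxl
            subst hxl; exact hc
          have := boundary_pos hT heqw hchX hchB hsep hnc
          rw [hδ.delta_of_rnf this, hδw]
          simp [Prod.ext_iff, hlen]

/-- Local move rule for right multiplication by a negative generator. -/
lemma mul_neg_cases (hT : TriHyp σ T) (hδ : DeltaHyp σ T δ) (w : A2TildeGroup T) (e : P) :
    δ (w * (a T e)⁻¹) = δ w + (0, 1) ∨
    δ (w * (a T e)⁻¹) + (0, 1) = δ w + (1, 0) ∨
    δ (w * (a T e)⁻¹) + (1, 0) = δ w := by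
  obtain ⟨X, Y, hR, hlx, hly⟩ := hδ.exists_rnf w
  have hδw : δ w = (X.length, Y.length) := hδ.delta_of_rnf hR
  obtain ⟨hw, hchX, hchY, hlh⟩ := isRNF_def.mp hR
  rcases eq_nil_or_append_last Y with rfl | ⟨Y₀, y, rfl⟩
  · rcases eq_nil_or_append_last X with rfl | ⟨X₀, x, rfl⟩
    · left
      have : IsRNF σ T (w * (a T e)⁻¹) [] [e] :=
        isRNF_def.mpr ⟨by rw [hw]; simp, List.isChain_nil, List.isChain_singleton _, by simp⟩
      rw [hδ.delta_of_rnf this, hδw]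
      rfl
    · by_cases hxe : x = e
      · right; right
        subst hxe
        have : IsRNF σ T (w * (a T x)⁻¹) X₀ [] :=
          rnf_drop_last_pos (isRNF_def.mpr ⟨hw, hchX, hchY, hlh⟩)
        rw [hδ.delta_of_rnf this, hδw]
        simp [Prod.ext_iff]
      · left
        have : IsRNF σ T (w * (a T e)⁻¹) (X₀ ++ [x]) [e] := by
          refine rnf_append_neg (isRNF_def.mpr ⟨hw, hchX, hchY, hlh⟩) (by simp) ?_
          intro _ xl hxl
          simp only [List.getLast?_concat, Option.mem_some_iff] at hxl
          subst hxl; exact hxe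
        rw [hδ.delta_of_rnf this, hδw]
        simp [Prod.ext_iff]
  · by_cases hm : y ∈ σ e
    · -- contraction of the two negative letters into a positive one, then push
      obtain ⟨r, hr⟩ := hT.third e hm
      have hry : r ∈ σ y := hT.mem23 hr
      obtain ⟨hchY₀, -, hlink⟩ := List.isChain_append.mp hchY
      have hlastr : ∀ yl ∈ Y₀.getLast?, yl ≠ r := by
        intro yl hyl heq
        exact hlink yl hyl y (by simp) (heq ▸ hry)
      obtain ⟨d₀, B, heqp, hlen, hchB, hhead, hlastsp, -⟩ := push hT Y₀ r hchY₀ hlastr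
      have heqw : w * (a T e)⁻¹ = pw T X * (a T d₀ * nw T B) := by
        rw [hw, nw_append, nw_singleton]
        have hcon : (a T y)⁻¹ * (a T e)⁻¹ = a T r := neg_contract hr
        calc pw T X * (nw T Y₀ * (a T y)⁻¹) * (a T e)⁻¹
            = pw T X * (nw T Y₀ * ((a T y)⁻¹ * (a T e)⁻¹)) := by group
          _ = pw T X * (nw T Y₀ * a T r) := by rw [hcon]
          _ = pw T X * (a T d₀ * nw T B) := by rw [heqp]
      have hsep : ∀ b ∈ B.head?, ∃ z₁ d₁ y₁,
          (z₁, y₁, d₀) ∈ T ∧ (z₁, d₁, b) ∈ T ∧ y₁ ≠ d₁ ∧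
          (∀ xl ∈ X.getLast?, xl ≠ y₁) := by
        intro b hb
        have hBne : B ≠ [] := by intro h; rw [h] at hb; simp at hb
        have hY₀ne : Y₀ ≠ [] := by
          intro h; apply hBne; rw [h] at hlen; exact List.length_eq_zero_iff.mp hlen
        obtain ⟨y₁, hy₁⟩ := Option.isSome_iff_exists.mp (List.isSome_head?.mpr hY₀ne)
        obtain ⟨z₁, d₁, hA, hB2, hne⟩ := hhead y₁ hy₁ b hb
        refine ⟨z₁, d₁, y₁, hA, hB2, hne, fun xl hxl => hlh xl hxl y₁ ?_⟩
        rw [List.head?_append_of_ne_nil _ hY₀ne]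
        exact hy₁
      rcases eq_nil_or_append_last X with rfl | ⟨X₀, x, rfl⟩
      · right; left
        have : IsRNF σ T (w * (a T e)⁻¹) ([] ++ [d₀]) B :=
          boundary_pos hT heqw hchX hchB hsep (by simp)
        rw [hδ.delta_of_rnf this, hδw]
        simp [Prod.ext_iff, hlen]
        try omega
      · by_cases hc : d₀ ∈ σ x
        · right; right
          obtain ⟨z', -, hrnf⟩ := boundary_contract hT heqw hchX hchB hsep hc
          rw [hδ.delta_of_rnf hrnf, hδw]
          simp [Prod.ext_iff, hlen]
          try omega
        · right; left
          have hnc : ∀ xl ∈ (X₀ ++ [x]).getLast?, d₀ ∉ σ xl := by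
            intro xl hxl
            simp only [List.getLast?_concat, Option.mem_some_iff] at hxl
            subst hxl; exact hc
          have := boundary_pos hT heqw hchX hchB hsep hnc
          rw [hδ.delta_of_rnf this, hδw]
          simp [Prod.ext_iff, hlen]
          try omega
    · left
      have : IsRNF σ T (w * (a T e)⁻¹) X (Y₀ ++ [y] ++ [e]) := by
        refine rnf_append_neg (isRNF_def.mpr ⟨hw, hchX, hchY, hlh⟩) ?_ (by simp)
        intro yl hyl
        simp only [List.getLast?_concat, Option.mem_some_iff] at hyl
        subst hyl; exact hm
      rw [hδ.delta_of_rnf this, hδw]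
      simp [Prod.ext_iff]

end LMR

section Bounds

variable {P L : Type} [Membership P L] [Fintype P] [Fintype L]
  [Configuration.ProjectivePlane P L] {σ : P ≃ L} {T : Set (P × P × P)}
  {δ : A2TildeGroup T → ℕ × ℕ}

lemma sum_le_pos (hT : TriHyp σ T) (hδ : DeltaHyp σ T δ) (w : A2TildeGroup T) (e : P) :
    (δ (w * a T e)).1 + (δ (w * a T e)).2 ≤ (δ w).1 + (δ w).2 + 1 := by
  rcases mul_pos_cases hT hδ w e with h | h | h <;>
    (rw [Prod.ext_iff] at h; simp only [Prod.fst_add, Prod.snd_add] at h; omega)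

lemma sum_le_neg (hT : TriHyp σ T) (hδ : DeltaHyp σ T δ) (w : A2TildeGroup T) (e : P) :
    (δ (w * (a T e)⁻¹)).1 + (δ (w * (a T e)⁻¹)).2 ≤ (δ w).1 + (δ w).2 + 1 := by
  rcases mul_neg_cases hT hδ w e with h | h | h <;>
    (rw [Prod.ext_iff] at h; simp only [Prod.fst_add, Prod.snd_add] at h; omega)

lemma sum_mul_pw_le (hT : TriHyp σ T) (hδ : DeltaHyp σ T δ) :
    ∀ (X : List P) (u : A2TildeGroup T),
    (δ (u * pw T X)).1 + (δ (u * pw T X)).2 ≤ (δ u).1 + (δ u).2 + X.length := by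
  intro X
  induction X using List.reverseRecOn with
  | nil => intro u; simp
  | append_singleton X₀ x IH =>
      intro u
      have h1 : u * pw T (X₀ ++ [x]) = (u * pw T X₀) * a T x := by
        rw [pw_append, pw_singleton, mul_assoc]
      rw [h1]
      have := sum_le_pos hT hδ (u * pw T X₀) x
      have := IH u
      simp only [List.length_append, List.length_cons, List.length_nil]
      omega

lemma sum_mul_nw_le (hT : TriHyp σ T) (hδ : DeltaHyp σ T δ) :
    ∀ (Y : List P) (u : A2TildeGroup T),
    (δ (u * nw T Y)).1 + (δ (u * nw T Y)).2 ≤ (δ u).1 + (δ u).2 + Y.length := by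
  intro Y
  induction Y using List.reverseRecOn with
  | nil => intro u; simp
  | append_singleton Y₀ y IH =>
      intro u
      have h1 : u * nw T (Y₀ ++ [y]) = (u * nw T Y₀) * (a T y)⁻¹ := by
        rw [nw_append, nw_singleton, mul_assoc]
      rw [h1]
      have := sum_le_neg hT hδ (u * nw T Y₀) y
      have := IH u
      simp only [List.length_append, List.length_cons, List.length_nil]
      omega

/-- the word-length bound for a word of the shape `u · X · Y⁻¹`. -/
lemma sum_word_le (hT : TriHyp σ T) (hδ : DeltaHyp σ T δ) (u : A2TildeGroup T) (X Y : List P) :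
    (δ (u * pw T X * nw T Y)).1 + (δ (u * pw T X * nw T Y)).2 ≤
      (δ u).1 + (δ u).2 + X.length + Y.length := by
  have h1 := sum_mul_nw_le hT hδ Y (u * pw T X)
  have h2 := sum_mul_pw_le hT hδ X u
  omega

lemma sum_pw_nw_le (hT : TriHyp σ T) (hδ : DeltaHyp σ T δ) (X Y : List P) :
    (δ (pw T X * nw T Y)).1 + (δ (pw T X * nw T Y)).2 ≤ X.length + Y.length := by
  have := sum_word_le hT hδ 1 X Y
  rw [one_mul] at this
  rw [hδ.delta_one] at this
  simpa using this

end Bounds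

section Forcing

variable {P L : Type} [Membership P L] [Fintype P] [Fintype L]
  [Configuration.ProjectivePlane P L] {σ : P ≃ L} {T : Set (P × P × P)}
  {δ : A2TildeGroup T → ℕ × ℕ}

/-- peeling the final negative letter off the right factor of an additive product. -/
lemma additive_drop_neg (hT : TriHyp σ T) (hδ : DeltaHyp σ T δ)
    {u v : A2TildeGroup T} {C D₀ : List P} {d : P}
    (hadd : δ (u * v) = δ u + δ v) (hv : IsRNF σ T v C (D₀ ++ [d])) :
    δ (u * v * a T d) = δ u + δ (v * a T d) ∧
    δ (v * a T d) + (0, 1) = δ v ∧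
    δ (u * v * a T d) + (0, 1) = δ (u * v) := by
  have hv' : IsRNF σ T (v * a T d) C D₀ := rnf_drop_last_neg hv
  have hδv : δ v = (C.length, D₀.length + 1) := by
    rw [hδ.delta_of_rnf hv]; simp
  have hδv' : δ (v * a T d) = (C.length, D₀.length) := hδ.delta_of_rnf hv'
  have hrep : u * v * a T d = u * pw T C * nw T D₀ := by
    rw [mul_assoc, (isRNF_def.mp hv').1, ← mul_assoc]
  have hword := sum_word_le hT hδ u C D₀
  rw [← hrep] at hword
  rcases mul_pos_cases hT hδ (u * v) d with h | h | h <;>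
    (simp only [Prod.ext_iff, Prod.fst_add, Prod.snd_add] at hadd hδv hδv' h ⊢; omega)

/-- peeling the final positive letter off the (purely positive) right factor of an
additive product. -/
lemma additive_drop_pos (hT : TriHyp σ T) (hδ : DeltaHyp σ T δ)
    {u v : A2TildeGroup T} {C₀ : List P} {c : P}
    (hadd : δ (u * v) = δ u + δ v) (hv : IsRNF σ T v (C₀ ++ [c]) []) :
    δ (u * v * (a T c)⁻¹) = δ u + δ (v * (a T c)⁻¹) ∧
    δ (v * (a T c)⁻¹) + (1, 0) = δ v ∧
    δ (u * v * (a T c)⁻¹) + (1, 0) = δ (u * v) := by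
  have hv' : IsRNF σ T (v * (a T c)⁻¹) C₀ [] := rnf_drop_last_pos hv
  have hδv : δ v = (C₀.length + 1, 0) := by
    rw [hδ.delta_of_rnf hv]; simp
  have hδv' : δ (v * (a T c)⁻¹) = (C₀.length, 0) := by
    rw [hδ.delta_of_rnf hv']; simp
  have hrep : u * v * (a T c)⁻¹ = u * pw T C₀ * nw T [] := by
    rw [mul_assoc, (isRNF_def.mp hv').1, ← mul_assoc]
  have hword := sum_word_le hT hδ u C₀ []
  rw [← hrep] at hword
  rcases mul_neg_cases hT hδ (u * v) c with h | h | h <;>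
    (simp only [Prod.ext_iff, Prod.fst_add, Prod.snd_add, List.length_nil]
      at hadd hδv hδv' h hword ⊢; omega)

/-- unique splitting of a `(+1,+1)` double step. -/
lemma unique_split (hT : TriHyp σ T) (hδ : DeltaHyp σ T δ)
    {v : A2TildeGroup T} {g h : P}
    (hyp : δ (v * a T g * (a T h)⁻¹) = δ v + (1, 1)) :
    δ (v * a T g) = δ v + (1, 0) ∧
    δ (v * a T g * (a T h)⁻¹) = δ (v * a T g) + (0, 1) := by
  rcases mul_pos_cases hT hδ v g with h1 | h1 | h1 <;>
    rcases mul_neg_cases hT hδ (v * a T g) h with h2 | h2 | h2 <;>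
    (simp only [Prod.ext_iff, Prod.fst_add, Prod.snd_add] at hyp h1 h2 ⊢; omega)

/-- if appending a negative letter increases `δ` by `(0,1)`, then the naive appended
form is again a right normal form, for EVERY right normal form of `w`. -/
lemma append_neg_strong (hT : TriHyp σ T) (hδ : DeltaHyp σ T δ)
    {w : A2TildeGroup T} {X Y : List P} {f : P}
    (hR : IsRNF σ T w X Y) (hinc : δ (w * (a T f)⁻¹) = δ w + (0, 1)) :
    IsRNF σ T (w * (a T f)⁻¹) X (Y ++ [f]) := by
  have hδw : δ w = (X.length, Y.length) := hδ.delta_of_rnf hR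
  obtain ⟨hw, hchX, hchY, hlh⟩ := isRNF_def.mp hR
  refine rnf_append_neg hR ?_ ?_
  · rcases eq_nil_or_append_last Y with rfl | ⟨Y₀, y, rfl⟩
    · simp
    · intro yl hyl
      simp only [List.getLast?_concat, Option.mem_some_iff] at hyl
      subst hyl
      intro hmem
      obtain ⟨r, hr⟩ := hT.third f hmem
      have hrep : w * (a T f)⁻¹ = pw T X * nw T Y₀ * a T r := by
        rw [hw, nw_append, nw_singleton]
        have hcon : (a T y)⁻¹ * (a T f)⁻¹ = a T r := neg_contract hr
        calc pw T X * (nw T Y₀ * (a T y)⁻¹) * (a T f)⁻¹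
            = pw T X * nw T Y₀ * ((a T y)⁻¹ * (a T f)⁻¹) := by group
          _ = pw T X * nw T Y₀ * a T r := by rw [hcon]
      have h1 := sum_le_pos hT hδ (pw T X * nw T Y₀) r
      have h2 := sum_pw_nw_le hT hδ X Y₀
      rw [← hrep] at h1
      simp only [Prod.ext_iff, Prod.fst_add, Prod.snd_add] at hinc hδw
      simp only [List.length_append, List.length_cons, List.length_nil] at hδw
      omega
  · rintro rfl
    intro x hx
    rcases eq_nil_or_append_last X with rfl | ⟨X₀, x', rfl⟩
    · simp at hx
    · simp only [List.getLast?_concat, Option.mem_some_iff] at hx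
      subst hx
      intro hxf
      subst hxf
      have hrep : w * (a T x')⁻¹ = pw T X₀ * nw T [] := by
        rw [hw, pw_append, pw_singleton]
        simp
      have h2 := sum_pw_nw_le hT hδ X₀ ([] : List P)
      rw [← hrep] at h2
      simp only [Prod.ext_iff, Prod.fst_add, Prod.snd_add] at hinc hδw
      simp only [List.length_append, List.length_cons, List.length_nil] at hδw h2
      omega

/-- if appending a positive letter increases `δ` by `(1,0)`, the push-through
construction gives a right normal form of `w · a_e` extending `X`. -/
lemma append_pos_strong (hT : TriHyp σ T) (hδ : DeltaHyp σ T δ)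
    {w : A2TildeGroup T} {X Y : List P} {e : P}
    (hR : IsRNF σ T w X Y) (hinc : δ (w * a T e) = δ w + (1, 0)) :
    ∃ d₀ B, IsRNF σ T (w * a T e) (X ++ [d₀]) B ∧ B.length = Y.length ∧
      nw T Y * a T e = a T d₀ * nw T B ∧
      (∀ yl ∈ Y.getLast?, ∀ bl ∈ B.getLast?, ∃ zl, yl ∈ σ zl ∧ (zl, e, bl) ∈ T) ∧
      (Y = [] → d₀ = e ∧ B = []) := by
  have hδw : δ w = (X.length, Y.length) := hδ.delta_of_rnf hR
  obtain ⟨hw, hchX, hchY, hlh⟩ := isRNF_def.mp hR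
  have hlaste : ∀ yl ∈ Y.getLast?, yl ≠ e := by
    rcases eq_nil_or_append_last Y with rfl | ⟨Y₀, y, rfl⟩
    · simp
    · intro yl hyl
      simp only [List.getLast?_concat, Option.mem_some_iff] at hyl
      subst hyl
      intro hcancel
      subst hcancel
      have : IsRNF σ T (w * a T y) X Y₀ :=
        rnf_drop_last_neg (isRNF_def.mpr ⟨hw, hchX, hchY, hlh⟩)
      have hcontra := hδ.delta_of_rnf this
      rw [hinc, hδw] at hcontra
      simp only [Prod.ext_iff, Prod.fst_add, Prod.snd_add, List.length_append,
        List.length_cons, List.length_nil] at hcontra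
      all_goals omega
  obtain ⟨d₀, B, heqp, hlen, hchB, hhead, hlastsp, hnil⟩ := push hT Y e hchY hlaste
  have heqw : w * a T e = pw T X * (a T d₀ * nw T B) := by
    rw [hw, mul_assoc, heqp]
  have hsep : ∀ b ∈ B.head?, ∃ z₁ d₁ y₁,
      (z₁, y₁, d₀) ∈ T ∧ (z₁, d₁, b) ∈ T ∧ y₁ ≠ d₁ ∧
      (∀ xl ∈ X.getLast?, xl ≠ y₁) := by
    intro b hb
    have hBne : B ≠ [] := by intro h; rw [h] at hb; simp at hb
    have hYne : Y ≠ [] := by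
      intro h; apply hBne; rw [h] at hlen; exact List.length_eq_zero_iff.mp hlen
    obtain ⟨y₁, hy₁⟩ := Option.isSome_iff_exists.mp (List.isSome_head?.mpr hYne)
    obtain ⟨z₁, d₁, hA, hB2, hne⟩ := hhead y₁ hy₁ b hb
    exact ⟨z₁, d₁, y₁, hA, hB2, hne, fun xl hxl => hlh xl hxl y₁ hy₁⟩
  have hnc : ∀ xl ∈ X.getLast?, d₀ ∉ σ xl := by
    rcases eq_nil_or_append_last X with rfl | ⟨X₀, x, rfl⟩
    · simp
    · intro xl hxl
      simp only [List.getLast?_concat, Option.mem_some_iff] at hxl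
      subst hxl
      intro hc
      obtain ⟨z', -, hrnf⟩ := boundary_contract hT heqw hchX hchB hsep hc
      have hcontra := hδ.delta_of_rnf hrnf
      rw [hinc, hδw] at hcontra
      simp only [Prod.ext_iff, Prod.fst_add, Prod.snd_add, List.length_append,
        List.length_cons, List.length_nil] at hcontra
      omega
  exact ⟨d₀, B, boundary_pos hT heqw hchX hchB hsep hnc, hlen, heqp, hlastsp, hnil⟩

end Forcing

section Push2

variable {P L : Type} [Membership P L] [Fintype P] [Fintype L]
  [Configuration.ProjectivePlane P L] {σ : P ≃ L} {T : Set (P × P × P)}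
  {δ : A2TildeGroup T → ℕ × ℕ}

set_option maxHeartbeats 1000000 in
/-- The double push: pushing `a_c` and then `a_e` (with `e ∉ σ c`) through `Y⁻¹`. -/
lemma push2 (hT : TriHyp σ T) :
    ∀ (Y : List P) (c e : P), List.Chain' (fun p q => p ∉ σ q) Y →
    (∀ yl ∈ Y.getLast?, yl ≠ c) → e ∉ σ c →
    ∃ (d₀ : P) (B : List P) (dh₀ : P) (Bh : List P),
      nw T Y * a T c = a T d₀ * nw T B ∧
      B.length = Y.length ∧
      List.Chain' (fun p q => p ∉ σ q) B ∧
      (∀ y₁ ∈ Y.head?, ∀ b₁ ∈ B.head?, ∃ z₁ d₁,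
        (z₁, y₁, d₀) ∈ T ∧ (z₁, d₁, b₁) ∈ T ∧ y₁ ≠ d₁) ∧
      (∀ bl ∈ B.getLast?, ∀ bhl ∈ Bh.getLast?, ∃ zl, bl ∈ σ zl ∧ (zl, e, bhl) ∈ T) ∧
      nw T B * a T e = a T dh₀ * nw T Bh ∧
      Bh.length = Y.length ∧
      List.Chain' (fun p q => p ∉ σ q) Bh ∧
      (∀ b₁ ∈ B.head?, ∀ bh₁ ∈ Bh.head?, ∃ z₁ d₁,
        (z₁, b₁, dh₀) ∈ T ∧ (z₁, d₁, bh₁) ∈ T ∧ b₁ ≠ d₁) ∧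
      (∀ yl ∈ Y.getLast?, ∀ bl ∈ B.getLast?, ∃ zl, yl ∈ σ zl ∧ (zl, c, bl) ∈ T) ∧
      dh₀ ∉ σ d₀ ∧
      (Y = [] → d₀ = c ∧ B = [] ∧ dh₀ = e ∧ Bh = []) := by
  intro Y
  induction Y using List.reverseRecOn with
  | nil =>
      intro c e _ _ hec
      exact ⟨c, [], e, [], by simp, rfl, List.isChain_nil, by simp, by simp, by simp, rfl,
        List.isChain_nil, by simp, by simp, hec, fun _ => ⟨rfl, rfl, rfl, rfl⟩⟩
  | append_singleton Y₀ y IH =>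
      intro c e hchain hlast hec
      have hyc : y ≠ c := hlast y (by simp [List.getLast?_concat])
      obtain ⟨z, c₁, By, hz1, hz2⟩ := interchange hT hyc
      have hByc : By ∈ σ c := hT.mem23 hz2
      have hBye : By ≠ e := by rintro rfl; exact hec hByc
      obtain ⟨zh, eh, Bhy, hzh1, hzh2⟩ := interchange hT hBye
      have hInv : eh ∉ σ c₁ :=
        invStep hT hyc hec hz1 hz2 hzh1 (hT.mem12 hzh2)
      obtain ⟨hch₀, -, hlink⟩ := List.isChain_append.mp hchain
      have hlinky : ∀ yl ∈ Y₀.getLast?, yl ∉ σ y := fun yl hyl => hlink yl hyl y (by simp)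
      have hlast₀ : ∀ yl ∈ Y₀.getLast?, yl ≠ c₁ := by
        intro yl hyl heq
        exact (hlinky yl hyl) (heq ▸ hT.mem23 hz1)
      obtain ⟨d₀, B₀, dh₀, Bh₀, heq1, hlen1, hchB₀, hhead1, hlast2sp, heq2, hlen2, hchBh₀,
        hhead2, hlast1sp, hinv, hnil₀⟩ := IH c₁ eh hch₀ hlast₀ hInv
      -- junction for B
      have hjB : ∀ bl ∈ B₀.getLast?, bl ∉ σ By := by
        intro bl hbl
        have hB₀ne : B₀ ≠ [] := by intro h; rw [h] at hbl; simp at hbl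
        have hY₀ne : Y₀ ≠ [] := by
          intro h; apply hB₀ne; rw [h] at hlen1; exact List.length_eq_zero_iff.mp hlen1
        obtain ⟨yl, hyl⟩ := Option.isSome_iff_exists.mp (List.getLast?_isSome.mpr hY₀ne)
        obtain ⟨zl, hylzl, hzl⟩ := hlast1sp yl hyl bl hbl
        exact chainC1 hT (hlinky yl hyl) hyc hz1 hz2 hylzl hzl
      -- junction for Bh
      have hjBh : ∀ bhl ∈ Bh₀.getLast?, bhl ∉ σ Bhy := by
        intro bhl hbhl
        have hBh₀ne : Bh₀ ≠ [] := by intro h; rw [h] at hbhl; simp at hbhl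
        have hB₀ne : B₀ ≠ [] := by
          intro h; apply hBh₀ne
          have : Y₀ = [] := List.length_eq_zero_iff.mp (by rw [← hlen1, h]; rfl)
          rw [this] at hlen2
          exact List.length_eq_zero_iff.mp hlen2
        obtain ⟨bl, hbl⟩ := Option.isSome_iff_exists.mp (List.getLast?_isSome.mpr hB₀ne)
        obtain ⟨zl, hblzl, hzl⟩ := hlast2sp bl hbl bhl hbhl
        exact chainC1 hT (hjB bl hbl) hBye hzh1 hzh2 hblzl hzl
      refine ⟨d₀, B₀ ++ [By], dh₀, Bh₀ ++ [Bhy], ?_, ?_, ?_, ?_, ?_, ?_, ?_, ?_, ?_, ?_, ?_, ?_⟩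
      · -- eq1
        rw [nw_append, nw_append, nw_singleton, nw_singleton]
        calc nw T Y₀ * (a T y)⁻¹ * a T c
            = nw T Y₀ * ((a T y)⁻¹ * a T c) := by rw [mul_assoc]
          _ = nw T Y₀ * (a T c₁ * (a T By)⁻¹) := by rw [interchange_eq hz1 hz2]
          _ = (nw T Y₀ * a T c₁) * (a T By)⁻¹ := by rw [mul_assoc]
          _ = (a T d₀ * nw T B₀) * (a T By)⁻¹ := by rw [heq1]
          _ = a T d₀ * (nw T B₀ * (a T By)⁻¹) := by rw [mul_assoc]
      · simp [hlen1]
      · exact List.isChain_append.mpr ⟨hchB₀, List.isChain_singleton _, by simpa using hjB⟩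
      · -- head spec for first push
        intro y₁ hy₁ b hb
        rcases eq_or_ne Y₀ [] with h0 | h0
        · obtain ⟨hd₀, hB₀, -, -⟩ := hnil₀ h0
          subst h0 hd₀ hB₀
          simp only [List.nil_append, List.head?_cons, Option.mem_some_iff] at hy₁ hb
          subst hy₁; subst hb
          exact ⟨z, c, hz1, hz2, hyc⟩
        · have hB₀ne : B₀ ≠ [] := fun h =>
            h0 (List.length_eq_zero_iff.mp (by rw [← hlen1, h]; rfl))
          rw [List.head?_append_of_ne_nil _ h0] at hy₁
          rw [List.head?_append_of_ne_nil _ hB₀ne] at hb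
          exact hhead1 y₁ hy₁ b hb
      · -- last spec for second push
        intro bl hbl bhl hbhl
        simp only [List.getLast?_concat, Option.mem_some_iff] at hbl hbhl
        subst hbl; subst hbhl
        exact ⟨zh, hT.mem12 hzh1, hzh2⟩
      · -- eq2
        rw [nw_append, nw_append, nw_singleton, nw_singleton]
        calc nw T B₀ * (a T By)⁻¹ * a T e
            = nw T B₀ * ((a T By)⁻¹ * a T e) := by rw [mul_assoc]
          _ = nw T B₀ * (a T eh * (a T Bhy)⁻¹) := by rw [interchange_eq hzh1 hzh2]
          _ = (nw T B₀ * a T eh) * (a T Bhy)⁻¹ := by rw [mul_assoc]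
          _ = (a T dh₀ * nw T Bh₀) * (a T Bhy)⁻¹ := by rw [heq2]
          _ = a T dh₀ * (nw T Bh₀ * (a T Bhy)⁻¹) := by rw [mul_assoc]
      · simp [hlen2]
      · exact List.isChain_append.mpr ⟨hchBh₀, List.isChain_singleton _, by simpa using hjBh⟩
      · -- head spec for second push
        intro b₁ hb₁ bh₁ hbh₁
        rcases eq_or_ne Y₀ [] with h0 | h0
        · obtain ⟨hd₀, hB₀, hdh₀, hBh₀⟩ := hnil₀ h0
          subst hB₀ hBh₀ hdh₀
          simp only [List.nil_append, List.head?_cons, Option.mem_some_iff] at hb₁ hbh₁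
          subst hb₁; subst hbh₁
          exact ⟨zh, e, hzh1, hzh2, hBye⟩
        · have hB₀ne : B₀ ≠ [] := fun h =>
            h0 (List.length_eq_zero_iff.mp (by rw [← hlen1, h]; rfl))
          have hBh₀ne : Bh₀ ≠ [] := fun h =>
            h0 (List.length_eq_zero_iff.mp (by rw [← hlen2, h]; rfl))
          rw [List.head?_append_of_ne_nil _ hB₀ne] at hb₁
          rw [List.head?_append_of_ne_nil _ hBh₀ne] at hbh₁
          exact hhead2 b₁ hb₁ bh₁ hbh₁
      · -- last spec for first push
        intro yl hyl bl hbl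
        simp only [List.getLast?_concat, Option.mem_some_iff] at hyl hbl
        subst hyl; subst hbl
        exact ⟨z, hT.mem12 hz1, hz2⟩
      · exact hinv
      · intro h; simp at h

end Push2

section BL

variable {P L : Type} [Membership P L] [Fintype P] [Fintype L]
  [Configuration.ProjectivePlane P L] {σ : P ≃ L} {T : Set (P × P × P)}
  {δ : A2TildeGroup T → ℕ × ℕ}

set_option maxHeartbeats 1000000 in
/-- the two-positive-letters lemma: if `δ(W a_c) = δ W + (1,0)` and `e ∉ σ c` then
`δ(W a_c a_e) = δ W + (2,0)`. -/
lemma two_pos_letters (hT : TriHyp σ T) (hδ : DeltaHyp σ T δ) {W : A2TildeGroup T} {c e : P}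
    (h1 : δ (W * a T c) = δ W + (1, 0)) (he : e ∉ σ c) :
    δ (W * a T c * a T e) = δ W + (2, 0) := by
  obtain ⟨X, Y, hR, -, -⟩ := hδ.exists_rnf W
  have hδW : δ W = (X.length, Y.length) := hδ.delta_of_rnf hR
  obtain ⟨hw, hchX, hchY, hlh⟩ := isRNF_def.mp hR
  rcases eq_nil_or_append_last Y with rfl | ⟨Y₀, y, rfl⟩
  · obtain ⟨d₀, B, hRNF1, hlenB, -, -, hnilB⟩ := append_pos_strong hT hδ hR h1
    obtain ⟨hd₀, hB⟩ := hnilB rfl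
    subst hB
    have hRNF2 : IsRNF σ T (W * a T c * a T e) (X ++ [d₀] ++ [e]) [] := by
      refine rnf_append_pos hRNF1 ?_
      intro xl hxl
      simp only [List.getLast?_concat, Option.mem_some_iff] at hxl
      subst hxl
      rw [hd₀]
      exact he
    rw [hδ.delta_of_rnf hRNF2, hδW]
    simp [Prod.ext_iff]
  · -- Y = Y₀ ++ [y]
    have hyc : y ≠ c := by
      intro hcancel
      subst hcancel
      have : IsRNF σ T (W * a T y) X Y₀ :=
        rnf_drop_last_neg (isRNF_def.mpr ⟨hw, hchX, hchY, hlh⟩)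
      have hcontra := hδ.delta_of_rnf this
      rw [h1, hδW] at hcontra
      simp only [Prod.ext_iff, Prod.fst_add, Prod.snd_add, List.length_append,
        List.length_cons, List.length_nil] at hcontra
      all_goals omega
    have hlaste : ∀ yl ∈ (Y₀ ++ [y]).getLast?, yl ≠ c := by
      intro yl hyl
      simp only [List.getLast?_concat, Option.mem_some_iff] at hyl
      subst hyl; exact hyc
    obtain ⟨d₀, B, dh₀, Bh, heq1, hlen1, hchB, hhead1, hlast2sp, heq2, hlen2, hchBh,
      hhead2, hlast1sp, hinv, -⟩ := push2 hT (Y₀ ++ [y]) c e hchY hlaste he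
    have heqw1 : W * a T c = pw T X * (a T d₀ * nw T B) := by
      rw [hw, mul_assoc, heq1]
    have hsep1 : ∀ b ∈ B.head?, ∃ z₁ d₁ y₁,
        (z₁, y₁, d₀) ∈ T ∧ (z₁, d₁, b) ∈ T ∧ y₁ ≠ d₁ ∧
        (∀ xl ∈ X.getLast?, xl ≠ y₁) := by
      intro b hb
      have hY₁ : ∃ y₁, (Y₀ ++ [y]).head? = some y₁ := by
        rcases Y₀ with _ | ⟨y₀, Y₀'⟩ <;> exact ⟨_, rfl⟩
      obtain ⟨y₁, hy₁⟩ := hY₁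
      obtain ⟨z₁, d₁, hA, hB2, hne⟩ := hhead1 y₁ hy₁ b hb
      exact ⟨z₁, d₁, y₁, hA, hB2, hne, fun xl hxl => hlh xl hxl y₁ hy₁⟩
    have hnc1 : ∀ xl ∈ X.getLast?, d₀ ∉ σ xl := by
      rcases eq_nil_or_append_last X with rfl | ⟨X₀, x, rfl⟩
      · simp
      · intro xl hxl
        simp only [List.getLast?_concat, Option.mem_some_iff] at hxl
        subst hxl
        intro hc
        obtain ⟨z', -, hrnf⟩ := boundary_contract hT heqw1 hchX hchB hsep1 hc
        have hcontra := hδ.delta_of_rnf hrnf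
        rw [h1, hδW] at hcontra
        simp only [Prod.ext_iff, Prod.fst_add, Prod.snd_add, List.length_append,
          List.length_cons, List.length_nil, hlen1] at hcontra
        all_goals omega
    have hRNF1 : IsRNF σ T (W * a T c) (X ++ [d₀]) B :=
      boundary_pos hT heqw1 hchX hchB hsep1 hnc1
    obtain ⟨hw1, hchX1, hchB1, hlh1⟩ := isRNF_def.mp hRNF1
    have heqw2 : W * a T c * a T e = pw T (X ++ [d₀]) * (a T dh₀ * nw T Bh) := by
      rw [hw1, mul_assoc, heq2]
    have hBne : B ≠ [] := by
      intro h
      rw [h] at hlen1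
      simp at hlen1
    obtain ⟨b₁, hb₁⟩ := Option.isSome_iff_exists.mp (List.isSome_head?.mpr hBne)
    have hsep2 : ∀ bh ∈ Bh.head?, ∃ z₁ d₁ y₁,
        (z₁, y₁, dh₀) ∈ T ∧ (z₁, d₁, bh) ∈ T ∧ y₁ ≠ d₁ ∧
        (∀ xl ∈ (X ++ [d₀]).getLast?, xl ≠ y₁) := by
      intro bh hbh
      obtain ⟨z₁, d₁, hA, hB2, hne⟩ := hhead2 b₁ hb₁ bh hbh
      exact ⟨z₁, d₁, b₁, hA, hB2, hne, fun xl hxl => hlh1 xl hxl b₁ hb₁⟩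
    have hnc2 : ∀ xl ∈ (X ++ [d₀]).getLast?, dh₀ ∉ σ xl := by
      intro xl hxl
      simp only [List.getLast?_concat, Option.mem_some_iff] at hxl
      subst hxl
      exact hinv
    have hRNF2 : IsRNF σ T (W * a T c * a T e) (X ++ [d₀] ++ [dh₀]) Bh :=
      boundary_pos hT heqw2 hchX1 hchBh hsep2 hnc2
    rw [hδ.delta_of_rnf hRNF2, hδW]
    have hlen2' : Bh.length = Y₀.length + 1 := by simpa using hlen2
    simp only [List.length_append, List.length_cons, List.length_nil, Prod.mk_add_mk,
      Prod.mk.injEq, hlen2']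
    all_goals omega

end BL

section Transfer

variable {P L : Type} [Membership P L] [Fintype P] [Fintype L]
  [Configuration.ProjectivePlane P L] {σ : P ≃ L} {T : Set (P × P × P)}
  {δ : A2TildeGroup T → ℕ × ℕ}

/-- KEY': in an additive product, the negative part of the right factor survives as a
suffix of the negative part of a right normal form of the product. -/
lemma key_rnf (hT : TriHyp σ T) (hδ : DeltaHyp σ T δ) :
    ∀ (D : List P) (u w₀ : A2TildeGroup T) (C : List P),
    δ (w₀ * u) = δ w₀ + δ u → IsRNF σ T u C D →
    ∃ X Y, IsRNF σ T (w₀ * u) X (Y ++ D) := by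
  intro D
  induction D using List.reverseRecOn with
  | nil =>
      intro u w₀ C hadd hu
      obtain ⟨X, Y, hR, -, -⟩ := hδ.exists_rnf (w₀ * u)
      exact ⟨X, Y, by simpa using hR⟩
  | append_singleton D₀ d IH =>
      intro u w₀ C hadd hu
      obtain ⟨hadd', hδdrop, hδdrop2⟩ := additive_drop_neg hT hδ hadd hu
      have hu' : IsRNF σ T (u * a T d) C D₀ := rnf_drop_last_neg hu
      have hadd'' : δ (w₀ * (u * a T d)) = δ w₀ + δ (u * a T d) := by
        rw [← mul_assoc]; exact hadd'
      obtain ⟨X, Y, hR'⟩ := IH (u * a T d) w₀ C hadd'' hu'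
      have hback : w₀ * (u * a T d) * (a T d)⁻¹ = w₀ * u := by group
      have hinc : δ (w₀ * (u * a T d) * (a T d)⁻¹) = δ (w₀ * (u * a T d)) + (0, 1) := by
        rw [hback, ← mul_assoc]
        exact hδdrop2.symm
      have happ := append_neg_strong hT hδ hR' hinc
      rw [hback] at happ
      exact ⟨X, Y, by rwa [List.append_assoc] at happ⟩

/-- transfer of a negative increment along an additive product. -/
lemma transfer_neg (hT : TriHyp σ T) (hδ : DeltaHyp σ T δ) {w₀ v : A2TildeGroup T} {f : P}
    (hadd : δ (w₀ * v) = δ w₀ + δ v)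
    (hinc : δ (v * (a T f)⁻¹) = δ v + (0, 1))
    (hn : 1 ≤ (δ v).2) :
    δ (w₀ * v * (a T f)⁻¹) = δ (w₀ * v) + (0, 1) := by
  obtain ⟨C, D, hv, hlC, hlD⟩ := hδ.exists_rnf v
  have hDne : D ≠ [] := by
    intro h
    rw [h] at hlD
    simp at hlD
    omega
  have happend := append_neg_strong hT hδ hv hinc
  have hjunc : ∀ x ∈ D.getLast?, x ∉ σ f := by
    have hch := (isRNF_def.mp happend).2.2.1
    have := (List.isChain_append.mp hch).2.2
    intro x hx
    exact this x hx f (by simp)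
  obtain ⟨X, Y, hR⟩ := key_rnf hT hδ D v w₀ C hadd hv
  have hfin : IsRNF σ T (w₀ * v * (a T f)⁻¹) X (Y ++ D ++ [f]) := by
    refine rnf_append_neg hR ?_ ?_
    · intro yl hyl
      rw [List.getLast?_append_of_ne_nil _ hDne] at hyl
      exact hjunc yl hyl
    · intro h
      exact absurd (List.append_eq_nil_iff.mp h).2 hDne
  rw [hδ.delta_of_rnf hfin, hδ.delta_of_rnf hR]
  simp [Prod.ext_iff, List.length_append]
  all_goals omega

/-- transfer of a positive increment along an additive product, purely positive case. -/
lemma transfer_pos_positive (hT : TriHyp σ T) (hδ : DeltaHyp σ T δ)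
    {w₀ u : A2TildeGroup T} {Cu : List P} {e : P}
    (hu : IsRNF σ T u Cu []) (hCne : Cu ≠ [])
    (hadd : δ (w₀ * u) = δ w₀ + δ u)
    (hinc : δ (u * a T e) = δ u + (1, 0)) :
    δ (w₀ * u * a T e) = δ (w₀ * u) + (1, 0) := by
  obtain ⟨C₀, c, rfl⟩ := (eq_nil_or_append_last Cu).resolve_left hCne
  have hδu : δ u = (C₀.length + 1, 0) := by
    rw [hδ.delta_of_rnf hu]; simp
  have he : e ∉ σ c := by
    intro hmem
    obtain ⟨z', hz'⟩ := hT.third c hmem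
    have hrep : u * a T e = pw T C₀ * nw T [z'] := by
      rw [(isRNF_def.mp hu).1, pw_append, pw_singleton, nw_singleton]
      have : a T c * a T e = (a T z')⁻¹ := pair_eq hz'
      calc pw T C₀ * a T c * nw T [] * a T e
          = pw T C₀ * (a T c * a T e) := by rw [nw_nil]; group
        _ = pw T C₀ * (a T z')⁻¹ := by rw [this]
        _ = pw T C₀ * nw T [z'] := by rw [nw_singleton]
    have hb := sum_pw_nw_le hT hδ C₀ [z']
    rw [← hrep] at hb
    rw [hinc, hδu] at hb
    simp only [Prod.fst_add, Prod.snd_add, List.length_cons, List.length_nil] at hb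
    omega
  obtain ⟨hdrop1, hdrop2, hdrop3⟩ := additive_drop_pos hT hδ hadd hu
  have hW : δ (w₀ * u * (a T c)⁻¹ * a T c) = δ (w₀ * u * (a T c)⁻¹) + (1, 0) := by
    have hback : w₀ * u * (a T c)⁻¹ * a T c = w₀ * u := by group
    rw [hback]
    simp only [Prod.ext_iff, Prod.fst_add, Prod.snd_add] at hdrop3 ⊢
    omega
  have hBL := two_pos_letters hT hδ hW he
  have hback2 : w₀ * u * (a T c)⁻¹ * a T c * a T e = w₀ * u * a T e := by group
  rw [hback2] at hBL
  rw [hBL]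
  simp only [Prod.ext_iff, Prod.fst_add, Prod.snd_add] at hdrop3 ⊢
  omega

set_option maxHeartbeats 1000000 in
/-- transfer of a positive increment along an additive product, when the right factor
is regular enough: `(δ v).2 = k+1` and `(δ v).1 ≥ 1`. -/
lemma transfer_pos (hT : TriHyp σ T) (hδ : DeltaHyp σ T δ) :
    ∀ (k : ℕ) (w₀ v : A2TildeGroup T) (f : P),
    δ (w₀ * v) = δ w₀ + δ v →
    δ (v * a T f) = δ v + (1, 0) →
    (δ v).2 = k + 1 → 1 ≤ (δ v).1 →
    δ (w₀ * v * a T f) = δ (w₀ * v) + (1, 0) := by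
  intro k
  induction k with
  | zero =>
      intro w₀ v f hadd hinc hn hm
      obtain ⟨C, D, hv, hlC, hlD⟩ := hδ.exists_rnf v
      have hDne : D ≠ [] := by
        intro h; rw [h] at hlD; simp at hlD; omega
      obtain ⟨D₀, d, rfl⟩ := (eq_nil_or_append_last D).resolve_left hDne
      have hD₀nil : D₀ = [] := by
        have : D₀.length + 1 = 1 := by
          have := hlD; simp at this; omega
        exact List.length_eq_zero_iff.mp (by omega)
      subst hD₀nil
      have hδv : δ v = (C.length, 1) := by
        rw [hδ.delta_of_rnf hv]; simp
      have hvd : IsRNF σ T (v * a T d) C [] := rnf_drop_last_neg hv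
      have hCne : C ≠ [] := by
        intro h
        rw [h] at hlC
        simp at hlC
        omega
      have hdf : d ≠ f := by
        intro hcancel
        subst hcancel
        have hcontra := hδ.delta_of_rnf hvd
        rw [hinc, hδv] at hcontra
        simp only [Prod.ext_iff, Prod.fst_add, Prod.snd_add] at hcontra
        omega
      obtain ⟨z, c', b', hzc', hzb'⟩ := interchange hT hdf
      have hkey : (a T d)⁻¹ * a T f = a T c' * (a T b')⁻¹ := interchange_eq hzc' hzb'
      have hvsplit : v * a T f = v * a T d * a T c' * (a T b')⁻¹ := by
        have h0 : v * a T f = v * a T d * ((a T d)⁻¹ * a T f) := by group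
        rw [h0, hkey]; group
      have hUS : δ (v * a T d * a T c' * (a T b')⁻¹) = δ (v * a T d) + (1, 1) := by
        rw [← hvsplit, hinc, hδ.delta_of_rnf hvd, hδv]
        simp [Prod.ext_iff]
      obtain ⟨hsplit1, hsplit2⟩ := unique_split hT hδ hUS
      obtain ⟨haddp, hdropeq, hdropeq2⟩ := additive_drop_neg hT hδ hadd hv
      -- the W-side
      have hWadd : δ (w₀ * (v * a T d)) = δ w₀ + δ (v * a T d) := by
        rw [← mul_assoc]; exact haddp
      have hWaux : δ (w₀ * (v * a T d) * a T c') = δ (w₀ * (v * a T d)) + (1, 0) :=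
        transfer_pos_positive hT hδ hvd hCne hWadd hsplit1
      -- now assemble the final normal form
      set W := w₀ * v * a T d with hWdef
      have hWadd' : δ (W * a T c') = δ W + (1, 0) := by
        rw [hWdef, mul_assoc w₀ v (a T d)]
        exact hWaux
      obtain ⟨Xs, Ys, hRW, -, -⟩ := hδ.exists_rnf W
      obtain ⟨d₀, B, hRNF1, hlenB, heqp, hlastsp, hnilsp⟩ := append_pos_strong hT hδ hRW hWadd'
      have hincd : δ (W * (a T d)⁻¹) = δ W + (0, 1) := by
        have hback : W * (a T d)⁻¹ = w₀ * v := by rw [hWdef]; group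
        rw [hback]
        simp only [Prod.ext_iff, Prod.fst_add, Prod.snd_add] at hdropeq2 ⊢
        omega
      have hRNF0 : IsRNF σ T (w₀ * v) Xs (Ys ++ [d]) := by
        have := append_neg_strong hT hδ hRW hincd
        rwa [show W * (a T d)⁻¹ = w₀ * v from by rw [hWdef]; group] at this
      have hjunc : ∀ yl ∈ Ys.getLast?, yl ∉ σ d := by
        have hch := (isRNF_def.mp hRNF0).2.2.1
        have := (List.isChain_append.mp hch).2.2
        intro yl hyl
        exact this yl hyl d (by simp)
      have hfin : IsRNF σ T (W * a T c' * (a T b')⁻¹) (Xs ++ [d₀]) (B ++ [b']) := by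
        refine rnf_append_neg hRNF1 ?_ ?_
        · intro bl hbl
          have hBne : B ≠ [] := by intro h; rw [h] at hbl; simp at hbl
          have hYsne : Ys ≠ [] := by
            intro h; apply hBne; rw [h] at hlenB; exact List.length_eq_zero_iff.mp hlenB
          obtain ⟨yl, hyl⟩ := Option.isSome_iff_exists.mp (List.getLast?_isSome.mpr hYsne)
          obtain ⟨zl, hylzl, hzl⟩ := hlastsp yl hyl bl hbl
          exact chainC1 hT (hjunc yl hyl) hdf hzc' hzb' hylzl hzl
        · intro hB
          have hYsnil : Ys = [] := by
            rw [hB] at hlenB; exact (List.length_eq_zero_iff.mp hlenB.symm)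
          obtain ⟨hd₀, -⟩ := hnilsp hYsnil
          intro x hx
          simp only [List.getLast?_concat, Option.mem_some_iff] at hx
          subst hx
          rw [hd₀]
          exact hT.thirds_ne hzc' hzb' hdf
      have hfinal_eq : W * a T c' * (a T b')⁻¹ = w₀ * v * a T f := by
        rw [hWdef, mul_assoc (w₀ * v) (a T d) (a T c')]
        rw [show w₀ * v * (a T d * a T c') * (a T b')⁻¹
              = w₀ * v * (a T d * a T c' * (a T b')⁻¹) from by group]
        congr 1
        have : a T d * a T c' * (a T b')⁻¹ = a T d * ((a T d)⁻¹ * a T f) := by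
          rw [hkey]; group
        rw [this]; group
      rw [hfinal_eq] at hfin
      rw [hδ.delta_of_rnf hfin, hδ.delta_of_rnf hRNF0]
      simp [Prod.ext_iff, List.length_append, hlenB]
      all_goals omega
  | succ k IH =>
      intro w₀ v f hadd hinc hn hm
      obtain ⟨C, D, hv, hlC, hlD⟩ := hδ.exists_rnf v
      have hDne : D ≠ [] := by
        intro h; rw [h] at hlD; simp at hlD; omega
      obtain ⟨D₀, d, rfl⟩ := (eq_nil_or_append_last D).resolve_left hDne
      have hδv : δ v = (C.length, D₀.length + 1) := by
        rw [hδ.delta_of_rnf hv]; simp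
      have hvd : IsRNF σ T (v * a T d) C D₀ := rnf_drop_last_neg hv
      have hδvd : δ (v * a T d) = (C.length, D₀.length) := hδ.delta_of_rnf hvd
      have hdf : d ≠ f := by
        intro hcancel
        subst hcancel
        have hcontra := hδ.delta_of_rnf hvd
        rw [hinc, hδv] at hcontra
        simp only [Prod.ext_iff, Prod.fst_add, Prod.snd_add] at hcontra
        omega
      obtain ⟨z, c', b', hzc', hzb'⟩ := interchange hT hdf
      have hkey : (a T d)⁻¹ * a T f = a T c' * (a T b')⁻¹ := interchange_eq hzc' hzb'
      have hvsplit : v * a T f = v * a T d * a T c' * (a T b')⁻¹ := by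
        have h0 : v * a T f = v * a T d * ((a T d)⁻¹ * a T f) := by group
        rw [h0, hkey]; group
      have hUS : δ (v * a T d * a T c' * (a T b')⁻¹) = δ (v * a T d) + (1, 1) := by
        rw [← hvsplit, hinc, hδvd, hδv]
        simp [Prod.ext_iff]
      obtain ⟨hsplit1, hsplit2⟩ := unique_split hT hδ hUS
      obtain ⟨haddp, hdropeq, hdropeq2⟩ := additive_drop_neg hT hδ hadd hv
      have hWadd : δ (w₀ * (v * a T d)) = δ w₀ + δ (v * a T d) := by
        rw [← mul_assoc]; exact haddp
      have hD₀len : D₀.length = k + 1 := by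
        rw [hδv] at hn
        simpa using hn
      have hrec : δ (w₀ * (v * a T d) * a T c') = δ (w₀ * (v * a T d)) + (1, 0) := by
        refine IH w₀ (v * a T d) c' hWadd hsplit1 ?_ ?_
        · rw [hδvd]; exact hD₀len
        · rw [hδvd]
          rw [hδv] at hm
          simpa using hm
      -- now append b'⁻¹ via transfer_neg
      have haddpc : δ (w₀ * (v * a T d * a T c')) = δ w₀ + δ (v * a T d * a T c') := by
        rw [show w₀ * (v * a T d * a T c') = w₀ * (v * a T d) * a T c' from by group]
        rw [hrec, hWadd, hsplit1]
        simp [Prod.ext_iff]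
        all_goals omega
      have hincb : δ (v * a T d * a T c' * (a T b')⁻¹) = δ (v * a T d * a T c') + (0, 1) :=
        hsplit2
      have hnb : 1 ≤ (δ (v * a T d * a T c')).2 := by
        rw [hsplit1, hδvd]
        simp [hD₀len]
      have htn := transfer_neg hT hδ haddpc hincb hnb
      have hfinal_eq : w₀ * (v * a T d * a T c') * (a T b')⁻¹ = w₀ * v * a T f := by
        rw [show w₀ * v * a T f = w₀ * (v * a T f) from by group, hvsplit]
        group
      rw [hfinal_eq] at htn
      rw [htn, haddpc, hsplit1, hδvd, hadd, hδv]
      simp [Prod.ext_iff]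
      all_goals omega

end Transfer


end A2

set_option maxHeartbeats 1000000 in
/-- if `δ (w₀·w₁) = δ w₀ + δ w₁`, `δ (w₁·w₂) = δ w₁ + δ w₂` and
`(1,1) ≤ δ w₁`, then `δ (w₀·w₁·w₂) = δ w₀ + δ w₁ + δ w₂`. -/
theorem a2_shape_additive_triple (P L : Type) [Fintype P] [Fintype L]
    [Membership P L] [Configuration.ProjectivePlane P L]
    (σ : P ≃ L) (T : Set (P × P × P))
    (hT1 : ∀ x y : P, (∃ z, (x, y, z) ∈ T) ↔ y ∈ σ x)
    (hT2 : ∀ x y z : P, (x, y, z) ∈ T → (y, z, x) ∈ T)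
    (hT3 : ∀ x y z z' : P, (x, y, z) ∈ T → (x, y, z') ∈ T → z = z')
    (δ : A2TildeGroup T → ℕ × ℕ)
    (hδ : ∀ (w : A2TildeGroup T) (m n : ℕ),
      δ w = (m, n) ↔ ∃ xs ys : List P, IsRNF σ T w xs ys ∧ xs.length = m ∧ ys.length = n)
    (w₀ w₁ w₂ : A2TildeGroup T)
    (h01 : δ (w₀ * w₁) = δ w₀ + δ w₁)
    (h12 : δ (w₁ * w₂) = δ w₁ + δ w₂)
    (h1 : (1, 1) ≤ δ w₁) :
    δ (w₀ * w₁ * w₂) = δ w₀ + δ w₁ + δ w₂ := by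

  have hT : A2.TriHyp σ T := ⟨hT1, hT2, hT3⟩
  have hD : A2.DeltaHyp σ T δ := ⟨hδ⟩
  have h1' : 1 ≤ (δ w₁).1 ∧ 1 ≤ (δ w₁).2 := Prod.le_def.mp h1
  suffices H : ∀ N (w₂ : A2TildeGroup T), (δ w₂).1 + (δ w₂).2 ≤ N →
      δ (w₁ * w₂) = δ w₁ + δ w₂ → δ (w₀ * w₁ * w₂) = δ w₀ + δ w₁ + δ w₂ by
    exact H ((δ w₂).1 + (δ w₂).2) w₂ le_rfl h12
  intro N
  induction N with
  | zero =>
      intro w₂ hle h12'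
      have h2 : δ w₂ = (0, 0) := by
        have h2a : (δ w₂).1 = 0 := by omega
        have h2b : (δ w₂).2 = 0 := by omega
        rw [Prod.ext_iff]; exact ⟨h2a, h2b⟩
      obtain ⟨E, F, hR, hlE, hlF⟩ := hD.exists_rnf w₂
      have hE : E = [] := List.length_eq_zero_iff.mp (by rw [hlE, h2])
      have hF : F = [] := List.length_eq_zero_iff.mp (by rw [hlF, h2])
      subst hE hF
      have hw2 : w₂ = 1 := by
        have := (A2.isRNF_def.mp hR).1
        simpa using this
      rw [h2, hw2, mul_one, h01]
      simp
  | succ N IH =>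
      intro w₂ hle h12'
      obtain ⟨E, F, hR, hlE, hlF⟩ := hD.exists_rnf w₂
      rcases A2.eq_nil_or_append_last F with rfl | ⟨F₀, f, rfl⟩
      · rcases A2.eq_nil_or_append_last E with rfl | ⟨E₀, e, rfl⟩
        · -- w₂ = 1
          have h2 : δ w₂ = (0, 0) := by
            rw [hD.delta_of_rnf hR]; rfl
          have hw2 : w₂ = 1 := by
            have := (A2.isRNF_def.mp hR).1
            simpa using this
          rw [h2, hw2, mul_one, h01]
          simp
        · -- peel a positive letter from the right of w₂
          obtain ⟨hdrop1, hdrop2, hdrop3⟩ := A2.additive_drop_pos hT hD h12' hR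
          have h12'' : δ (w₁ * (w₂ * (a T e)⁻¹)) = δ w₁ + δ (w₂ * (a T e)⁻¹) := by
            rw [← mul_assoc]; exact hdrop1
          have hle' : (δ (w₂ * (a T e)⁻¹)).1 + (δ (w₂ * (a T e)⁻¹)).2 ≤ N := by
            simp only [Prod.ext_iff, Prod.fst_add, Prod.snd_add] at hdrop2
            omega
          have hIH := IH (w₂ * (a T e)⁻¹) hle' h12''
          have haddv : δ (w₀ * (w₁ * (w₂ * (a T e)⁻¹))) =
              δ w₀ + δ (w₁ * (w₂ * (a T e)⁻¹)) := by
            rw [← mul_assoc, hIH, h12'']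
            rw [add_assoc]
          have hincv : δ ((w₁ * (w₂ * (a T e)⁻¹)) * a T e) =
              δ (w₁ * (w₂ * (a T e)⁻¹)) + (1, 0) := by
            have hback : (w₁ * (w₂ * (a T e)⁻¹)) * a T e = w₁ * w₂ := by group
            rw [hback, h12', h12'']
            simp only [Prod.ext_iff, Prod.fst_add, Prod.snd_add] at hdrop2 ⊢
            omega
          have hn2 : 1 ≤ (δ (w₁ * (w₂ * (a T e)⁻¹))).2 := by
            have := congrArg Prod.snd h12''
            simp only [Prod.snd_add] at this
            omega
          have hm2 : 1 ≤ (δ (w₁ * (w₂ * (a T e)⁻¹))).1 := by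
            have := congrArg Prod.fst h12''
            simp only [Prod.fst_add] at this
            omega
          obtain ⟨k, hk⟩ : ∃ k, (δ (w₁ * (w₂ * (a T e)⁻¹))).2 = k + 1 :=
            ⟨(δ (w₁ * (w₂ * (a T e)⁻¹))).2 - 1, by omega⟩
          have htp := A2.transfer_pos hT hD k w₀ (w₁ * (w₂ * (a T e)⁻¹)) e haddv hincv hk hm2
          have hback2 : w₀ * (w₁ * (w₂ * (a T e)⁻¹)) * a T e = w₀ * w₁ * w₂ := by group
          rw [hback2] at htp
          rw [htp, haddv, h12'']
          simp only [Prod.ext_iff, Prod.fst_add, Prod.snd_add] at hdrop2 ⊢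
          omega
      · -- peel a negative letter from the right of w₂
        obtain ⟨hdrop1, hdrop2, hdrop3⟩ := A2.additive_drop_neg hT hD h12' hR
        have h12'' : δ (w₁ * (w₂ * a T f)) = δ w₁ + δ (w₂ * a T f) := by
          rw [← mul_assoc]; exact hdrop1
        have hle' : (δ (w₂ * a T f)).1 + (δ (w₂ * a T f)).2 ≤ N := by
          simp only [Prod.ext_iff, Prod.fst_add, Prod.snd_add] at hdrop2
          omega
        have hIH := IH (w₂ * a T f) hle' h12''
        have haddv : δ (w₀ * (w₁ * (w₂ * a T f))) = δ w₀ + δ (w₁ * (w₂ * a T f)) := by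
          rw [← mul_assoc, hIH, h12'']
          rw [add_assoc]
        have hincv : δ ((w₁ * (w₂ * a T f)) * (a T f)⁻¹) =
            δ (w₁ * (w₂ * a T f)) + (0, 1) := by
          have hback : (w₁ * (w₂ * a T f)) * (a T f)⁻¹ = w₁ * w₂ := by group
          rw [hback, h12', h12'']
          simp only [Prod.ext_iff, Prod.fst_add, Prod.snd_add] at hdrop2 ⊢
          omega
        have hn2 : 1 ≤ (δ (w₁ * (w₂ * a T f))).2 := by
          have := congrArg Prod.snd h12''
          simp only [Prod.snd_add] at this
          omega
        have htn := A2.transfer_neg hT hD haddv hincv hn2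
        have hback2 : w₀ * (w₁ * (w₂ * a T f)) * (a T f)⁻¹ = w₀ * w₁ * w₂ := by group
        rw [hback2] at htn
        rw [htn, haddv, h12'']
        simp only [Prod.ext_iff, Prod.fst_add, Prod.snd_add] at hdrop2 ⊢
        omega
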